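/- Let m₀, n₀ ∈ ℕ, let M be an n₀ × m₀ matrix with entries in ℂ(T) such that the ℂ(T)-linear map v ↦ M·v from ℂ(T)^{m₀} to ℂ(T)^{n₀} is injective, and let w ∈ ℂ(T)^{n₀}. Suppose there exists N₀ ∈ ℕ such that for every natural number N ≥ N₀, all entries of M and all entries of w are defined at N and there exists a vector c ∈ ℂ^{m₀} with M(N)·c = w(N), where M(N) and w(N) denote entrywise evaluation at N. Then there exists v ∈ ℂ(T)^{m₀} with M·v = w. -/

import Mathlib

/-- A rational function over `ℂ` is defined at `z` if its (reduced) denominator does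
not vanish at `z`. -/
def RatFuncDefinedAt (p : RatFunc ℂ) (z : ℂ) : Prop :=
  Polynomial.eval z p.denom ≠ 0

/-- Evaluation of a rational function over `ℂ` at `z`. -/
noncomputable def ratFuncEval (p : RatFunc ℂ) (z : ℂ) : ℂ :=
  RatFunc.eval (RingHom.id ℂ) z p

lemma ratFuncDefinedAt_add {x y : RatFunc ℂ} {z : ℂ} (hx : RatFuncDefinedAt x z)
    (hy : RatFuncDefinedAt y z) : RatFuncDefinedAt (x + y) z := by
  obtain ⟨q, hq⟩ := RatFunc.denom_add_dvd x y
  intro h0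
  apply mul_ne_zero hx hy
  rw [← Polynomial.eval_mul, hq, Polynomial.eval_mul, h0, zero_mul]

lemma ratFuncDefinedAt_mul {x y : RatFunc ℂ} {z : ℂ} (hx : RatFuncDefinedAt x z)
    (hy : RatFuncDefinedAt y z) : RatFuncDefinedAt (x * y) z := by
  obtain ⟨q, hq⟩ := RatFunc.denom_mul_dvd x y
  intro h0
  apply mul_ne_zero hx hy
  rw [← Polynomial.eval_mul, hq, Polynomial.eval_mul, h0, zero_mul]

lemma eval₂_id_eq (p : Polynomial ℂ) (z : ℂ) :
    Polynomial.eval₂ (RingHom.id ℂ) z p = Polynomial.eval z p := by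
  rfl

lemma ratFuncEval_add {x y : RatFunc ℂ} {z : ℂ} (hx : RatFuncDefinedAt x z)
    (hy : RatFuncDefinedAt y z) :
    ratFuncEval (x + y) z = ratFuncEval x z + ratFuncEval y z := by
  apply RatFunc.eval_add <;> rw [eval₂_id_eq] <;> assumption

lemma ratFuncEval_mul {x y : RatFunc ℂ} {z : ℂ} (hx : RatFuncDefinedAt x z)
    (hy : RatFuncDefinedAt y z) :
    ratFuncEval (x * y) z = ratFuncEval x z * ratFuncEval y z := by
  apply RatFunc.eval_mul <;> rw [eval₂_id_eq] <;> assumption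

lemma ratFuncEval_sum {ι : Type*} (s : Finset ι) (p : ι → RatFunc ℂ) (z : ℂ)
    (h : ∀ i ∈ s, RatFuncDefinedAt (p i) z) :
    RatFuncDefinedAt (∑ i ∈ s, p i) z ∧
      ratFuncEval (∑ i ∈ s, p i) z = ∑ i ∈ s, ratFuncEval (p i) z := by
  classical
  induction s using Finset.cons_induction with
  | empty =>
      constructor
      · simp [RatFuncDefinedAt]
      · simp [ratFuncEval, RatFunc.eval_zero]
  | cons a s ha ih =>
      have h1 : RatFuncDefinedAt (p a) z := h a (Finset.mem_cons_self a s)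
      obtain ⟨hd, he⟩ := ih (fun i hi => h i (Finset.mem_cons_of_mem hi))
      rw [Finset.sum_cons, Finset.sum_cons]
      exact ⟨ratFuncDefinedAt_add h1 hd, by rw [ratFuncEval_add h1 hd, he]⟩

/-- Interpolation lemma: if an injective `ℂ(T)`-linear system `M · v = w` is solvable
over `ℂ` after evaluation at every sufficiently large natural number, then it is
solvable over `ℂ(T)`. -/
theorem exists_solution_of_eventually_eval_solvable
    (m₀ n₀ : ℕ) (M : Matrix (Fin n₀) (Fin m₀) (RatFunc ℂ))
    (hM : Function.Injective M.mulVec)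
    (w : Fin n₀ → RatFunc ℂ)
    (h : ∃ N₀ : ℕ, ∀ N : ℕ, N₀ ≤ N →
      (∀ i j, RatFuncDefinedAt (M i j) (N : ℂ)) ∧
      (∀ i, RatFuncDefinedAt (w i) (N : ℂ)) ∧
      ∃ c : Fin m₀ → ℂ,
        (Matrix.of fun i j => ratFuncEval (M i j) (N : ℂ)).mulVec c =
          fun i => ratFuncEval (w i) (N : ℂ)) :
    ∃ v : Fin m₀ → RatFunc ℂ, M.mulVec v = w := by
  classical
  obtain ⟨N₀, hN₀⟩ := h
  by_cases hw : w ∈ LinearMap.range M.mulVecLin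
  · obtain ⟨v, hv⟩ := hw
    exact ⟨v, by rwa [Matrix.mulVecLin_apply] at hv⟩
  exfalso
  -- separating functional
  obtain ⟨f, hfw, hmap⟩ :=
    Submodule.exists_dual_map_eq_bot_of_notMem hw inferInstance
  have hf0 : ∀ v : Fin m₀ → RatFunc ℂ, f (M.mulVec v) = 0 := by
    intro v
    have : f (M.mulVec v) ∈ Submodule.map f (LinearMap.range M.mulVecLin) :=
      Submodule.mem_map_of_mem ⟨v, rfl⟩
    rw [hmap] at this
    exact (Submodule.mem_bot (RatFunc ℂ)).mp this
  set u : Fin n₀ → RatFunc ℂ := fun i => f (fun j => if i = j then 1 else 0) with hu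
  have key1 : ∀ x : Fin n₀ → RatFunc ℂ, f x = ∑ i, x i * u i := by
    intro x
    simpa [smul_eq_mul] using f.pi_apply_eq_sum_univ x
  have key2 : ∀ j, ∑ i, M i j * u i = 0 := by
    intro j
    have := hf0 (Pi.single j 1)
    rw [key1] at this
    simpa [Matrix.mulVec_single] using this
  set g : RatFunc ℂ := f w with hg
  have hg0 : g ≠ 0 := hfw
  -- finite bad set
  set S : Set ℂ :=
    (⋃ i : Fin n₀, {z | Polynomial.eval z (u i).denom = 0}) ∪
      {z | Polynomial.eval z g.num = 0} with hS
  have hSfin : S.Finite := by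
    apply Set.Finite.union
    · exact Set.finite_iUnion fun i =>
        Polynomial.finite_setOf_isRoot (RatFunc.denom_ne_zero (u i))
    · exact Polynomial.finite_setOf_isRoot (RatFunc.num_ne_zero hg0)
  have hTfin : {N : ℕ | (N : ℂ) ∈ S}.Finite := by
    apply Set.Finite.preimage _ hSfin
    exact Set.injOn_of_injective (fun a b hab => Nat.cast_injective hab)
  obtain ⟨N, hN⟩ : (Set.Ici N₀ \ {N : ℕ | (N : ℂ) ∈ S}).Nonempty :=
    ((Set.Ici_infinite N₀).diff hTfin).nonempty
  obtain ⟨hN₁, hN₂⟩ := hN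
  obtain ⟨hMd, hwd, c, hc⟩ := hN₀ N hN₁
  have hud : ∀ i, RatFuncDefinedAt (u i) (N : ℂ) := by
    intro i hi
    exact hN₂ (Set.mem_union_left _ (Set.mem_iUnion.mpr ⟨i, hi⟩))
  have hgnum : Polynomial.eval (N : ℂ) g.num ≠ 0 := fun hh =>
    hN₂ (Set.mem_union_right _ hh)
  -- evaluate key2
  have ev2 : ∀ j, ∑ i, ratFuncEval (M i j) (N : ℂ) * ratFuncEval (u i) (N : ℂ) = 0 := by
    intro j
    have hdef : ∀ i ∈ Finset.univ, RatFuncDefinedAt (M i j * u i) (N : ℂ) :=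
      fun i _ => ratFuncDefinedAt_mul (hMd i j) (hud i)
    have := (ratFuncEval_sum Finset.univ (fun i => M i j * u i) (N : ℂ) hdef).2
    rw [key2 j] at this
    have hz : ratFuncEval 0 (N : ℂ) = 0 := by simp [ratFuncEval, RatFunc.eval_zero]
    rw [hz] at this
    rw [← Finset.sum_congr rfl fun i _ => ratFuncEval_mul (hMd i j) (hud i)]
    exact this.symm
  -- evaluate g = ∑ w i * u i
  have evg : ratFuncEval g (N : ℂ) =
      ∑ i, ratFuncEval (w i) (N : ℂ) * ratFuncEval (u i) (N : ℂ) := by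
    have hdef : ∀ i ∈ Finset.univ, RatFuncDefinedAt (w i * u i) (N : ℂ) :=
      fun i _ => ratFuncDefinedAt_mul (hwd i) (hud i)
    rw [hg, key1 w]
    rw [(ratFuncEval_sum Finset.univ (fun i => w i * u i) (N : ℂ) hdef).2]
    exact Finset.sum_congr rfl fun i _ => ratFuncEval_mul (hwd i) (hud i)
  -- the evaluation of g is nonzero
  have hgden : RatFuncDefinedAt g (N : ℂ) := by
    rw [hg, key1 w]
    exact (ratFuncEval_sum Finset.univ (fun i => w i * u i) (N : ℂ)
      (fun i _ => ratFuncDefinedAt_mul (hwd i) (hud i))).1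
  have hgne : ratFuncEval g (N : ℂ) ≠ 0 := by
    rw [ratFuncEval, RatFunc.eval, eval₂_id_eq, eval₂_id_eq]
    exact div_ne_zero hgnum hgden
  -- but the evaluation of g is zero, by the solvability hypothesis
  apply hgne
  rw [evg]
  have hwc : ∀ i, ratFuncEval (w i) (N : ℂ) = ∑ j, ratFuncEval (M i j) (N : ℂ) * c j := by
    intro i
    rw [← congrFun hc i]
    simp [Matrix.mulVec, dotProduct]
  calc (∑ i, ratFuncEval (w i) (N : ℂ) * ratFuncEval (u i) (N : ℂ))
      = ∑ i, ∑ j, ratFuncEval (M i j) (N : ℂ) * c j * ratFuncEval (u i) (N : ℂ) := by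
        refine Finset.sum_congr rfl fun i _ => ?_
        rw [hwc i, Finset.sum_mul]
    _ = ∑ j, c j * ∑ i, ratFuncEval (M i j) (N : ℂ) * ratFuncEval (u i) (N : ℂ) := by
        rw [Finset.sum_comm]
        refine Finset.sum_congr rfl fun j _ => ?_
        rw [Finset.mul_sum]
        refine Finset.sum_congr rfl fun i _ => ?_
        ring
    _ = 0 := by simp [ev2]
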